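/- Fix full-support distributions P_1,…,P_{M1}, Q_1,…,Q_{M2} on a finite alphabet X, positive reals α, β, and a nonempty set S ⊆ [M1]×[M2] of pairs with distinct first coordinates and distinct second coordinates. Then the constrained minimum over tuples (Ω_1,…,Ω_{M1}, Ψ_1,…,Ψ_{M2}) of probability distributions satisfying Ω_i = Ψ_j for all (i,j) ∈ S of Σ_i α D(Ω_i‖P_i) + Σ_j β D(Ψ_j‖Q_j) equals Σ_{(i,j) ∈ S} min over a single distribution V of (α D(V‖P_i) + β D(V‖Q_j)), which equals Σ_{(i,j)∈S} α D_{β/(α+β)}(Q_j‖P_i). -/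

import Mathlib

open scoped BigOperators

/-- Kullback–Leibler divergence between pmfs on a finite alphabet
(convention `0 log 0 = 0`). -/
noncomputable def klDiv {X : Type*} [Fintype X] (P Q : X → ℝ) : ℝ :=
  ∑ x, P x * Real.log (P x / Q x)

/-- Rényi divergence of order `lam ∈ (0,1)` between pmfs on a finite alphabet. -/
noncomputable def renyiDiv {X : Type*} [Fintype X] (lam : ℝ) (P Q : X → ℝ) : ℝ :=
  (1 / (lam - 1)) * Real.log (∑ x, P x ^ lam * Q x ^ (1 - lam))

noncomputable def tilt {X : Type*} [Fintype X] (P Q : X → ℝ) (lam : ℝ) : X → ℝ :=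
  fun x => P x ^ (1 - lam) * Q x ^ lam / (∑ y, P y ^ (1 - lam) * Q y ^ lam)

section aux
variable {X : Type*} [Fintype X]

lemma klDiv_self (P : X → ℝ) : klDiv P P = 0 := by
  unfold klDiv
  apply Finset.sum_eq_zero
  intro x _
  rcases eq_or_ne (P x) 0 with h | h
  · simp [h]
  · rw [div_self h]; simp

lemma Zpos [Nonempty X] (P Q : X → ℝ) (hP : ∀ x, 0 < P x) (hQ : ∀ x, 0 < Q x) (lam : ℝ) :
    0 < ∑ y, P y ^ (1 - lam) * Q y ^ lam :=
  Finset.sum_pos (fun y _ => mul_pos (Real.rpow_pos_of_pos (hP y) _)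
    (Real.rpow_pos_of_pos (hQ y) _)) Finset.univ_nonempty

lemma tilt_pos [Nonempty X] (P Q : X → ℝ) (hP : ∀ x, 0 < P x) (hQ : ∀ x, 0 < Q x) (lam : ℝ)
    (x : X) : 0 < tilt P Q lam x :=
  div_pos (mul_pos (Real.rpow_pos_of_pos (hP x) _) (Real.rpow_pos_of_pos (hQ x) _))
    (Zpos P Q hP hQ lam)

lemma tilt_sum [Nonempty X] (P Q : X → ℝ) (hP : ∀ x, 0 < P x) (hQ : ∀ x, 0 < Q x) (lam : ℝ) :
    ∑ x, tilt P Q lam x = 1 := by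
  unfold tilt
  rw [← Finset.sum_div]
  exact div_self (Zpos P Q hP hQ lam).ne'

lemma klDiv_nonneg (V W : X → ℝ) (hV0 : ∀ x, 0 ≤ V x) (hV1 : ∑ x, V x = 1)
    (hW0 : ∀ x, 0 < W x) (hW1 : ∑ x, W x = 1) : 0 ≤ klDiv V W := by
  have key : ∀ x, V x - W x ≤ V x * Real.log (V x / W x) := by
    intro x
    rcases eq_or_ne (V x) 0 with h | h
    · simp [h]; linarith [hW0 x]
    · have hv : 0 < V x := (hV0 x).lt_of_ne' h
      have h1 : Real.log (W x / V x) ≤ W x / V x - 1 :=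
        Real.log_le_sub_one_of_pos (div_pos (hW0 x) hv)
      have h2 : Real.log (V x / W x) = - Real.log (W x / V x) := by
        rw [← Real.log_inv, inv_div]
      have h3 := mul_le_mul_of_nonneg_left h1 hv.le
      have h4 : V x * (W x / V x - 1) = W x - V x := by field_simp
      rw [h2]
      nlinarith
  calc (0:ℝ) = ∑ x, (V x - W x) := by rw [Finset.sum_sub_distrib, hV1, hW1]; ring
  _ ≤ ∑ x, V x * Real.log (V x / W x) := Finset.sum_le_sum (fun x _ => key x)
  _ = klDiv V W := rfl

lemma decomp [Nonempty X] (P Q V : X → ℝ) (hP : ∀ x, 0 < P x) (hQ : ∀ x, 0 < Q x)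
    (α β : ℝ) (hα : 0 < α) (hβ : 0 < β)
    (hV0 : ∀ x, 0 ≤ V x) (hV1 : ∑ x, V x = 1) :
    α * klDiv V P + β * klDiv V Q
      = (α + β) * klDiv V (tilt P Q (β / (α + β))) + α * renyiDiv (β / (α + β)) Q P := by
  set lam := β / (α + β) with hlam
  have hab : 0 < α + β := by linarith
  have hZ : 0 < ∑ y, P y ^ (1 - lam) * Q y ^ lam := Zpos P Q hP hQ lam
  have hZ' : (∑ x, Q x ^ lam * P x ^ (1 - lam)) = ∑ y, P y ^ (1 - lam) * Q y ^ lam :=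
    Finset.sum_congr rfl (fun x _ => mul_comm _ _)
  have hC : α * renyiDiv lam Q P
      = -(α + β) * Real.log (∑ y, P y ^ (1 - lam) * Q y ^ lam) := by
    unfold renyiDiv
    rw [hZ', ← mul_assoc]
    congr 1
    have h1 : lam - 1 = -(α / (α + β)) := by
      rw [hlam]; field_simp; ring
    rw [h1]
    field_simp
  have hRHS : (α + β) * klDiv V (tilt P Q lam) + α * renyiDiv lam Q P
      = ∑ x, ((α + β) * (V x * Real.log (V x / tilt P Q lam x))
          + V x * (-(α + β) * Real.log (∑ y, P y ^ (1 - lam) * Q y ^ lam))) := by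
    rw [Finset.sum_add_distrib, hC]
    congr 1
    · unfold klDiv; rw [Finset.mul_sum]
    · rw [← Finset.sum_mul, hV1, one_mul]
  rw [hRHS]
  unfold klDiv
  rw [Finset.mul_sum, Finset.mul_sum, ← Finset.sum_add_distrib]
  apply Finset.sum_congr rfl
  intro x _
  rcases eq_or_ne (V x) 0 with h | h
  · simp [h]
  · have hv : 0 < V x := (hV0 x).lt_of_ne' h
    have ht : 0 < tilt P Q lam x := tilt_pos P Q hP hQ lam x
    have hlogtilt : Real.log (tilt P Q lam x)
        = (1 - lam) * Real.log (P x) + lam * Real.log (Q x)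
          - Real.log (∑ y, P y ^ (1 - lam) * Q y ^ lam) := by
      unfold tilt
      rw [Real.log_div (mul_pos (Real.rpow_pos_of_pos (hP x) _)
            (Real.rpow_pos_of_pos (hQ x) _)).ne' hZ.ne',
          Real.log_mul (Real.rpow_pos_of_pos (hP x) _).ne'
            (Real.rpow_pos_of_pos (hQ x) _).ne',
          Real.log_rpow (hP x), Real.log_rpow (hQ x)]
    rw [Real.log_div hv.ne' (hP x).ne', Real.log_div hv.ne' (hQ x).ne',
        Real.log_div hv.ne' ht.ne', hlogtilt, hlam]
    field_simp
    ring

lemma value_at_tilt [Nonempty X] (P Q : X → ℝ) (hP : ∀ x, 0 < P x) (hQ : ∀ x, 0 < Q x)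
    (α β : ℝ) (hα : 0 < α) (hβ : 0 < β) :
    α * klDiv (tilt P Q (β / (α + β))) P + β * klDiv (tilt P Q (β / (α + β))) Q
      = α * renyiDiv (β / (α + β)) Q P := by
  rw [decomp P Q _ hP hQ α β hα hβ (fun x => (tilt_pos P Q hP hQ _ x).le)
    (tilt_sum P Q hP hQ _), klDiv_self]
  ring

lemma lower_single [Nonempty X] (P Q V : X → ℝ) (hP : ∀ x, 0 < P x) (hQ : ∀ x, 0 < Q x)
    (α β : ℝ) (hα : 0 < α) (hβ : 0 < β)
    (hV0 : ∀ x, 0 ≤ V x) (hV1 : ∑ x, V x = 1) :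
    α * renyiDiv (β / (α + β)) Q P ≤ α * klDiv V P + β * klDiv V Q := by
  rw [decomp P Q V hP hQ α β hα hβ hV0 hV1]
  have h := klDiv_nonneg V (tilt P Q (β / (α + β))) hV0 hV1
    (tilt_pos P Q hP hQ _) (tilt_sum P Q hP hQ _)
  nlinarith

lemma single_sInf [Nonempty X] (P Q : X → ℝ) (hP : ∀ x, 0 < P x) (hQ : ∀ x, 0 < Q x)
    (α β : ℝ) (hα : 0 < α) (hβ : 0 < β) :
    sInf {r : ℝ | ∃ V : X → ℝ, (∀ x, 0 ≤ V x) ∧ (∑ x, V x = 1) ∧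
        r = α * klDiv V P + β * klDiv V Q} = α * renyiDiv (β / (α + β)) Q P := by
  have hmem : α * renyiDiv (β / (α + β)) Q P ∈ {r : ℝ | ∃ V : X → ℝ,
      (∀ x, 0 ≤ V x) ∧ (∑ x, V x = 1) ∧ r = α * klDiv V P + β * klDiv V Q} :=
    ⟨tilt P Q (β / (α + β)), fun x => (tilt_pos P Q hP hQ _ x).le,
      tilt_sum P Q hP hQ _, (value_at_tilt P Q hP hQ α β hα hβ).symm⟩
  have hlb : ∀ r ∈ {r : ℝ | ∃ V : X → ℝ,
      (∀ x, 0 ≤ V x) ∧ (∑ x, V x = 1) ∧ r = α * klDiv V P + β * klDiv V Q},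
      α * renyiDiv (β / (α + β)) Q P ≤ r := by
    rintro r ⟨V, h0, h1, rfl⟩
    exact lower_single P Q V hP hQ α β hα hβ h0 h1
  exact le_antisymm (csInf_le ⟨_, hlb⟩ hmem) (le_csInf ⟨_, hmem⟩ hlb)

end aux

theorem stmt18 {X : Type*} [Fintype X] [Nonempty X] (M1 M2 : ℕ)
    (P : Fin M1 → X → ℝ) (Q : Fin M2 → X → ℝ)
    (hP0 : ∀ i x, 0 < P i x) (hP1 : ∀ i, ∑ x, P i x = 1)
    (hQ0 : ∀ j x, 0 < Q j x) (hQ1 : ∀ j, ∑ x, Q j x = 1)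
    (α β : ℝ) (hα : 0 < α) (hβ : 0 < β)
    (S : Finset (Fin M1 × Fin M2)) (hSne : S.Nonempty)
    (hS1 : ∀ p ∈ S, ∀ q ∈ S, p.1 = q.1 → p = q)
    (hS2 : ∀ p ∈ S, ∀ q ∈ S, p.2 = q.2 → p = q) :
    sInf {r : ℝ | ∃ (Om : Fin M1 → X → ℝ) (Ps : Fin M2 → X → ℝ),
          (∀ i x, 0 ≤ Om i x) ∧ (∀ i, ∑ x, Om i x = 1) ∧
          (∀ j x, 0 ≤ Ps j x) ∧ (∀ j, ∑ x, Ps j x = 1) ∧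
          (∀ p ∈ S, Om p.1 = Ps p.2) ∧
          r = (∑ i, α * klDiv (Om i) (P i)) + ∑ j, β * klDiv (Ps j) (Q j)}
        = ∑ p ∈ S, sInf {r : ℝ | ∃ V : X → ℝ, (∀ x, 0 ≤ V x) ∧ (∑ x, V x = 1) ∧
            r = α * klDiv V (P p.1) + β * klDiv V (Q p.2)} ∧
      (∑ p ∈ S, sInf {r : ℝ | ∃ V : X → ℝ, (∀ x, 0 ≤ V x) ∧ (∑ x, V x = 1) ∧
            r = α * klDiv V (P p.1) + β * klDiv V (Q p.2)})
        = ∑ p ∈ S, α * renyiDiv (β / (α + β)) (Q p.2) (P p.1) := by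
  classical
  have hsum2 : (∑ p ∈ S, sInf {r : ℝ | ∃ V : X → ℝ, (∀ x, 0 ≤ V x) ∧ (∑ x, V x = 1) ∧
        r = α * klDiv V (P p.1) + β * klDiv V (Q p.2)})
      = ∑ p ∈ S, α * renyiDiv (β / (α + β)) (Q p.2) (P p.1) :=
    Finset.sum_congr rfl (fun p _ =>
      single_sInf (P p.1) (Q p.2) (hP0 p.1) (hQ0 p.2) α β hα hβ)
  refine ⟨?_, hsum2⟩
  rw [hsum2]
  set C : ℝ := ∑ p ∈ S, α * renyiDiv (β / (α + β)) (Q p.2) (P p.1) with hCdef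
  -- lower bound
  have hlb : ∀ r ∈ {r : ℝ | ∃ (Om : Fin M1 → X → ℝ) (Ps : Fin M2 → X → ℝ),
          (∀ i x, 0 ≤ Om i x) ∧ (∀ i, ∑ x, Om i x = 1) ∧
          (∀ j x, 0 ≤ Ps j x) ∧ (∀ j, ∑ x, Ps j x = 1) ∧
          (∀ p ∈ S, Om p.1 = Ps p.2) ∧
          r = (∑ i, α * klDiv (Om i) (P i)) + ∑ j, β * klDiv (Ps j) (Q j)},
      C ≤ r := by
    rintro r ⟨Om, Ps, hOm0, hOm1, hPs0, hPs1, hmatch, rfl⟩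
    have h1 : ∑ p ∈ S, α * klDiv (Om p.1) (P p.1) ≤ ∑ i, α * klDiv (Om i) (P i) := by
      have himg : ∑ i ∈ S.image Prod.fst, α * klDiv (Om i) (P i)
          = ∑ p ∈ S, α * klDiv (Om p.1) (P p.1) :=
        Finset.sum_image (fun p hp q hq => hS1 p hp q hq)
      rw [← himg]
      exact Finset.sum_le_sum_of_subset_of_nonneg (Finset.subset_univ _)
        (fun i _ _ => mul_nonneg hα.le
          (klDiv_nonneg (Om i) (P i) (hOm0 i) (hOm1 i) (hP0 i) (hP1 i)))
    have h2 : ∑ p ∈ S, β * klDiv (Ps p.2) (Q p.2) ≤ ∑ j, β * klDiv (Ps j) (Q j) := by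
      have himg : ∑ j ∈ S.image Prod.snd, β * klDiv (Ps j) (Q j)
          = ∑ p ∈ S, β * klDiv (Ps p.2) (Q p.2) :=
        Finset.sum_image (fun p hp q hq => hS2 p hp q hq)
      rw [← himg]
      exact Finset.sum_le_sum_of_subset_of_nonneg (Finset.subset_univ _)
        (fun j _ _ => mul_nonneg hβ.le
          (klDiv_nonneg (Ps j) (Q j) (hPs0 j) (hPs1 j) (hQ0 j) (hQ1 j)))
    have h3 : C ≤ ∑ p ∈ S, (α * klDiv (Om p.1) (P p.1) + β * klDiv (Ps p.2) (Q p.2)) := by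
      apply Finset.sum_le_sum
      intro p hp
      rw [← hmatch p hp]
      exact lower_single (P p.1) (Q p.2) (Om p.1) (hP0 p.1) (hQ0 p.2) α β hα hβ
        (hOm0 p.1) (hOm1 p.1)
    rw [Finset.sum_add_distrib] at h3
    linarith
  -- explicit minimizer
  let Om0 : Fin M1 → X → ℝ := fun i =>
    if h : ∃ j, (i, j) ∈ S then tilt (P i) (Q h.choose) (β / (α + β)) else P i
  let Ps0 : Fin M2 → X → ℝ := fun j =>
    if h : ∃ i, (i, j) ∈ S then tilt (P h.choose) (Q j) (β / (α + β)) else Q j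
  have hOmS : ∀ p ∈ S, Om0 p.1 = tilt (P p.1) (Q p.2) (β / (α + β)) := by
    intro p hp
    have h : ∃ j, (p.1, j) ∈ S := ⟨p.2, by simpa using hp⟩
    have hch : h.choose = p.2 :=
      congrArg Prod.snd (hS1 (p.1, h.choose) h.choose_spec p hp rfl)
    show (if h : ∃ j, (p.1, j) ∈ S then tilt (P p.1) (Q h.choose) (β / (α + β))
        else P p.1) = _
    rw [dif_pos h, hch]
  have hPsS : ∀ p ∈ S, Ps0 p.2 = tilt (P p.1) (Q p.2) (β / (α + β)) := by
    intro p hp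
    have h : ∃ i, (i, p.2) ∈ S := ⟨p.1, by simpa using hp⟩
    have hch : h.choose = p.1 :=
      congrArg Prod.fst (hS2 (h.choose, p.2) h.choose_spec p hp rfl)
    show (if h : ∃ i, (i, p.2) ∈ S then tilt (P h.choose) (Q p.2) (β / (α + β))
        else Q p.2) = _
    rw [dif_pos h, hch]
  have hOmout : ∀ i, i ∉ S.image Prod.fst → Om0 i = P i := by
    intro i hi
    have h : ¬ ∃ j, (i, j) ∈ S := by
      rintro ⟨j, hj⟩
      exact hi (Finset.mem_image.mpr ⟨(i, j), hj, rfl⟩)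
    show (if h : ∃ j, (i, j) ∈ S then tilt (P i) (Q h.choose) (β / (α + β))
        else P i) = P i
    rw [dif_neg h]
  have hPsout : ∀ j, j ∉ S.image Prod.snd → Ps0 j = Q j := by
    intro j hj
    have h : ¬ ∃ i, (i, j) ∈ S := by
      rintro ⟨i, hi⟩
      exact hj (Finset.mem_image.mpr ⟨(i, j), hi, rfl⟩)
    show (if h : ∃ i, (i, j) ∈ S then tilt (P h.choose) (Q j) (β / (α + β))
        else Q j) = Q j
    rw [dif_neg h]
  have hOmpos : ∀ i x, 0 ≤ Om0 i x := by
    intro i x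
    show 0 ≤ (if h : ∃ j, (i, j) ∈ S then tilt (P i) (Q h.choose) (β / (α + β))
        else P i) x
    split
    · exact (tilt_pos _ _ (hP0 i) (hQ0 _) _ x).le
    · exact (hP0 i x).le
  have hOmsum : ∀ i, ∑ x, Om0 i x = 1 := by
    intro i
    show ∑ x, (if h : ∃ j, (i, j) ∈ S then tilt (P i) (Q h.choose) (β / (α + β))
        else P i) x = 1
    split
    · exact tilt_sum _ _ (hP0 i) (hQ0 _) _
    · exact hP1 i
  have hPspos : ∀ j x, 0 ≤ Ps0 j x := by
    intro j x
    show 0 ≤ (if h : ∃ i, (i, j) ∈ S then tilt (P h.choose) (Q j) (β / (α + β))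
        else Q j) x
    split
    · exact (tilt_pos _ _ (hP0 _) (hQ0 j) _ x).le
    · exact (hQ0 j x).le
  have hPssum : ∀ j, ∑ x, Ps0 j x = 1 := by
    intro j
    show ∑ x, (if h : ∃ i, (i, j) ∈ S then tilt (P h.choose) (Q j) (β / (α + β))
        else Q j) x = 1
    split
    · exact tilt_sum _ _ (hP0 _) (hQ0 j) _
    · exact hQ1 j
  have hval1 : ∑ i, α * klDiv (Om0 i) (P i)
      = ∑ p ∈ S, α * klDiv (tilt (P p.1) (Q p.2) (β / (α + β))) (P p.1) := by
    have himg : ∑ i ∈ S.image Prod.fst, α * klDiv (Om0 i) (P i)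
        = ∑ p ∈ S, α * klDiv (Om0 p.1) (P p.1) :=
      Finset.sum_image (fun p hp q hq => hS1 p hp q hq)
    rw [← Finset.sum_subset (Finset.subset_univ (S.image Prod.fst))
        (fun i _ hi => by rw [hOmout i hi, klDiv_self, mul_zero]), himg]
    exact Finset.sum_congr rfl (fun p hp => by rw [hOmS p hp])
  have hval2 : ∑ j, β * klDiv (Ps0 j) (Q j)
      = ∑ p ∈ S, β * klDiv (tilt (P p.1) (Q p.2) (β / (α + β))) (Q p.2) := by
    have himg : ∑ j ∈ S.image Prod.snd, β * klDiv (Ps0 j) (Q j)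
        = ∑ p ∈ S, β * klDiv (Ps0 p.2) (Q p.2) :=
      Finset.sum_image (fun p hp q hq => hS2 p hp q hq)
    rw [← Finset.sum_subset (Finset.subset_univ (S.image Prod.snd))
        (fun j _ hj => by rw [hPsout j hj, klDiv_self, mul_zero]), himg]
    exact Finset.sum_congr rfl (fun p hp => by rw [hPsS p hp])
  have hmemT : C ∈ {r : ℝ | ∃ (Om : Fin M1 → X → ℝ) (Ps : Fin M2 → X → ℝ),
          (∀ i x, 0 ≤ Om i x) ∧ (∀ i, ∑ x, Om i x = 1) ∧
          (∀ j x, 0 ≤ Ps j x) ∧ (∀ j, ∑ x, Ps j x = 1) ∧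
          (∀ p ∈ S, Om p.1 = Ps p.2) ∧
          r = (∑ i, α * klDiv (Om i) (P i)) + ∑ j, β * klDiv (Ps j) (Q j)} := by
    refine ⟨Om0, Ps0, hOmpos, hOmsum, hPspos, hPssum,
      fun p hp => (hOmS p hp).trans (hPsS p hp).symm, ?_⟩
    rw [hval1, hval2, ← Finset.sum_add_distrib, hCdef]
    exact Finset.sum_congr rfl (fun p _ =>
      (value_at_tilt (P p.1) (Q p.2) (hP0 p.1) (hQ0 p.2) α β hα hβ).symm)
  exact le_antisymm (csInf_le ⟨C, hlb⟩ hmemT) (le_csInf ⟨C, hmemT⟩ hlb)
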